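/- Let T : ℤ² → ℝ² be the map T(x,y) = (x − y, x + y), and let u, v, w ∈ ℤ² with u ≠ w such that the Euclidean distances satisfy ‖u − v‖ = 1 and ‖v − w‖ = 1. Let D₁ be the axis-parallel closed unit square centered at (T(u) + T(v))/2 and D₂ the axis-parallel closed unit square centered at (T(v) + T(w))/2. Then {D₁, D₂} is a discriminating code for the three points T(u), T(v), T(w): T(u) lies in D₁ only, T(w) lies in D₂ only, and T(v) lies in both D₁ and D₂. -/

import Mathlib

/-- A point `p` belongs to the axis-parallel closed unit square centered at `c`
(the closed ball of radius `1/2` in the sup metric of `ℝ × ℝ`). -/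
def inSq (p c : ℝ × ℝ) : Prop := dist p c ≤ 1 / 2

/-- The code of a point `p` with respect to a finite set `Φ` of axis-parallel
closed unit squares, given by their centers. -/
def sqCode (Φ : Finset (ℝ × ℝ)) (p : ℝ × ℝ) : Set (ℝ × ℝ) :=
  {c | c ∈ Φ ∧ inSq p c}

/-- The map `T(x, y) = (x - y, x + y)` (rotation by `π/4` and scaling by `√2`). -/
def Tmap (u : ℤ × ℤ) : ℝ × ℝ := ((u.1 : ℝ) - (u.2 : ℝ), (u.1 : ℝ) + (u.2 : ℝ))

/-- Euclidean distance between two points of `ℤ²`. -/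
noncomputable def eucDist (u v : ℤ × ℤ) : ℝ :=
  Real.sqrt (((u.1 - v.1 : ℤ) : ℝ) ^ 2 + ((u.2 - v.2 : ℤ) : ℝ) ^ 2)

lemma sq_sum_one (a b : ℤ) (h : a ^ 2 + b ^ 2 = 1) :
    (a = 1 ∧ b = 0) ∨ (a = -1 ∧ b = 0) ∨ (a = 0 ∧ b = 1) ∨ (a = 0 ∧ b = -1) := by
  have h1 : a ≤ 1 := by nlinarith [sq_nonneg b]
  have h2 : -1 ≤ a := by nlinarith [sq_nonneg b]
  have h3 : b ≤ 1 := by nlinarith [sq_nonneg a]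
  have h4 : -1 ≤ b := by nlinarith [sq_nonneg a]
  interval_cases a <;> interval_cases b <;> simp_all

lemma eucDist_one {u v : ℤ × ℤ} (h : eucDist u v = 1) :
    (u.1 - v.1) ^ 2 + (u.2 - v.2) ^ 2 = 1 := by
  unfold eucDist at h
  rw [Real.sqrt_eq_one] at h
  exact_mod_cast h

lemma key (A1 A2 B1 B2 : ℝ) (hA1 : A1 = 1 ∨ A1 = -1) (hA2 : A2 = 1 ∨ A2 = -1)
    (hB1 : B1 = 1 ∨ B1 = -1) (hB2 : B2 = 1 ∨ B2 = -1)
    (hne : ¬(A1 = -B1 ∧ A2 = -B2)) :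
    (3/2 ≤ A1 + B1/2 ∨ A1 + B1/2 ≤ -(3/2) ∨ 3/2 ≤ A2 + B2/2 ∨ A2 + B2/2 ≤ -(3/2)) ∧
    (3/2 ≤ B1 + A1/2 ∨ B1 + A1/2 ≤ -(3/2) ∨ 3/2 ≤ B2 + A2/2 ∨ B2 + A2/2 ≤ -(3/2)) := by
  rcases hA1 with rfl | rfl <;> rcases hA2 with rfl | rfl <;>
    rcases hB1 with rfl | rfl <;> rcases hB2 with rfl | rfl <;> norm_num at hne <;> norm_num

theorem stmt15 (u v w : ℤ × ℤ) (huw : u ≠ w)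
    (huv : eucDist u v = 1) (hvw : eucDist v w = 1) :
    inSq (Tmap u) (midpoint ℝ (Tmap u) (Tmap v)) ∧
    ¬ inSq (Tmap u) (midpoint ℝ (Tmap v) (Tmap w)) ∧
    inSq (Tmap w) (midpoint ℝ (Tmap v) (Tmap w)) ∧
    ¬ inSq (Tmap w) (midpoint ℝ (Tmap u) (Tmap v)) ∧
    inSq (Tmap v) (midpoint ℝ (Tmap u) (Tmap v)) ∧
    inSq (Tmap v) (midpoint ℝ (Tmap v) (Tmap w)) := by
  have hmid : ∀ p q : ℝ × ℝ, midpoint ℝ p q = ((p.1 + q.1) / 2, (p.2 + q.2) / 2) := by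
    intro p q; ext <;> simp [midpoint, AffineMap.lineMap_apply] <;> ring
  have hdist : ∀ p q : ℝ × ℝ, dist p q = max |p.1 - q.1| |p.2 - q.2| := by
    intro p q; simp [Prod.dist_eq, Real.dist_eq]
  have ha := eucDist_one huv
  have hb := eucDist_one hvw
  have hA1' : (u.1 - v.1) - (u.2 - v.2) = 1 ∨ (u.1 - v.1) - (u.2 - v.2) = -1 := by
    rcases sq_sum_one _ _ ha with ⟨e1, e2⟩ | ⟨e1, e2⟩ | ⟨e1, e2⟩ | ⟨e1, e2⟩ <;> omega
  have hA2' : (u.1 - v.1) + (u.2 - v.2) = 1 ∨ (u.1 - v.1) + (u.2 - v.2) = -1 := by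
    rcases sq_sum_one _ _ ha with ⟨e1, e2⟩ | ⟨e1, e2⟩ | ⟨e1, e2⟩ | ⟨e1, e2⟩ <;> omega
  have hB1' : (v.1 - w.1) - (v.2 - w.2) = 1 ∨ (v.1 - w.1) - (v.2 - w.2) = -1 := by
    rcases sq_sum_one _ _ hb with ⟨e1, e2⟩ | ⟨e1, e2⟩ | ⟨e1, e2⟩ | ⟨e1, e2⟩ <;> omega
  have hB2' : (v.1 - w.1) + (v.2 - w.2) = 1 ∨ (v.1 - w.1) + (v.2 - w.2) = -1 := by
    rcases sq_sum_one _ _ hb with ⟨e1, e2⟩ | ⟨e1, e2⟩ | ⟨e1, e2⟩ | ⟨e1, e2⟩ <;> omega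
  have hA1 : ((u.1 : ℝ) - v.1) - ((u.2 : ℝ) - v.2) = 1 ∨
      ((u.1 : ℝ) - v.1) - ((u.2 : ℝ) - v.2) = -1 := by
    rcases hA1' with h | h <;> [left; right] <;> exact_mod_cast h
  have hA2 : ((u.1 : ℝ) - v.1) + ((u.2 : ℝ) - v.2) = 1 ∨
      ((u.1 : ℝ) - v.1) + ((u.2 : ℝ) - v.2) = -1 := by
    rcases hA2' with h | h <;> [left; right] <;> exact_mod_cast h
  have hB1 : ((v.1 : ℝ) - w.1) - ((v.2 : ℝ) - w.2) = 1 ∨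
      ((v.1 : ℝ) - w.1) - ((v.2 : ℝ) - w.2) = -1 := by
    rcases hB1' with h | h <;> [left; right] <;> exact_mod_cast h
  have hB2 : ((v.1 : ℝ) - w.1) + ((v.2 : ℝ) - w.2) = 1 ∨
      ((v.1 : ℝ) - w.1) + ((v.2 : ℝ) - w.2) = -1 := by
    rcases hB2' with h | h <;> [left; right] <;> exact_mod_cast h
  have hne : ¬(((u.1 : ℝ) - v.1) - ((u.2 : ℝ) - v.2) = -((( v.1 : ℝ) - w.1) - ((v.2 : ℝ) - w.2)) ∧
      ((u.1 : ℝ) - v.1) + ((u.2 : ℝ) - v.2) = -(((v.1 : ℝ) - w.1) + ((v.2 : ℝ) - w.2))) := by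
    rintro ⟨p, q⟩
    apply huw
    have p' : (u.1 - v.1) - (u.2 - v.2) = -((v.1 - w.1) - (v.2 - w.2)) := by exact_mod_cast p
    have q' : (u.1 - v.1) + (u.2 - v.2) = -((v.1 - w.1) + (v.2 - w.2)) := by exact_mod_cast q
    exact Prod.ext_iff.mpr ⟨by omega, by omega⟩
  obtain ⟨k1, k2⟩ := key _ _ _ _ hA1 hA2 hB1 hB2 hne
  have bA1 : -1 ≤ ((u.1 : ℝ) - v.1) - ((u.2 : ℝ) - v.2) ∧
      ((u.1 : ℝ) - v.1) - ((u.2 : ℝ) - v.2) ≤ 1 := by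
    rcases hA1 with h | h <;> rw [h] <;> norm_num
  have bA2 : -1 ≤ ((u.1 : ℝ) - v.1) + ((u.2 : ℝ) - v.2) ∧
      ((u.1 : ℝ) - v.1) + ((u.2 : ℝ) - v.2) ≤ 1 := by
    rcases hA2 with h | h <;> rw [h] <;> norm_num
  have bB1 : -1 ≤ ((v.1 : ℝ) - w.1) - ((v.2 : ℝ) - w.2) ∧
      ((v.1 : ℝ) - w.1) - ((v.2 : ℝ) - w.2) ≤ 1 := by
    rcases hB1 with h | h <;> rw [h] <;> norm_num
  have bB2 : -1 ≤ ((v.1 : ℝ) - w.1) + ((v.2 : ℝ) - w.2) ∧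
      ((v.1 : ℝ) - w.1) + ((v.2 : ℝ) - w.2) ≤ 1 := by
    rcases hB2 with h | h <;> rw [h] <;> norm_num
  obtain ⟨bA1l, bA1r⟩ := bA1
  obtain ⟨bA2l, bA2r⟩ := bA2
  obtain ⟨bB1l, bB1r⟩ := bB1
  obtain ⟨bB2l, bB2r⟩ := bB2
  refine ⟨?_, fun hc => ?_, ?_, fun hc => ?_, ?_, ?_⟩
  · simp only [inSq, hmid, hdist, Tmap, max_le_iff, abs_le]
    refine ⟨⟨?_, ?_⟩, ?_, ?_⟩ <;> linarith
  · simp only [inSq, hmid, hdist, Tmap, max_le_iff, abs_le] at hc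
    obtain ⟨⟨c1, c2⟩, c3, c4⟩ := hc
    rcases k1 with h | h | h | h <;> linarith
  · simp only [inSq, hmid, hdist, Tmap, max_le_iff, abs_le]
    refine ⟨⟨?_, ?_⟩, ?_, ?_⟩ <;> linarith
  · simp only [inSq, hmid, hdist, Tmap, max_le_iff, abs_le] at hc
    obtain ⟨⟨c1, c2⟩, c3, c4⟩ := hc
    rcases k2 with h | h | h | h <;> linarith
  · simp only [inSq, hmid, hdist, Tmap, max_le_iff, abs_le]
    refine ⟨⟨?_, ?_⟩, ?_, ?_⟩ <;> linarith
  · simp only [inSq, hmid, hdist, Tmap, max_le_iff, abs_le]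
    refine ⟨⟨?_, ?_⟩, ?_, ?_⟩ <;> linarith
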